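/- Let X_1, …, X_t be independent [0,1]-valued random variables with common mean p, and let p̂_s be the mean of the first s of them. For ξ > 0 and α, f(t) ≥ 1, ∑_{s=1}^t P(p̂_s − p ≤ −(ξ + √(α log f(t)/s))) ≤ 1/(2 ξ² f(t)^{2α}). -/

import Mathlib

open MeasureTheory ProbabilityTheory Real

/-- positivity of the Hoeffding denominator -/
lemma hoeff_D_pos (p l : ℝ) (hp0 : 0 ≤ p) (hp1 : p ≤ 1) :
    0 < 1 - p + p * Real.exp (-l) := by
  rcases lt_or_eq_of_le hp1 with h | h
  · have : 0 ≤ p * Real.exp (-l) := mul_nonneg hp0 (Real.exp_pos _).le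
    linarith
  · subst h; simpa using Real.exp_pos (-l)

/-- the core analytic inequality for Hoeffding's lemma -/
lemma hoeff_log_bound (p : ℝ) (hp0 : 0 ≤ p) (hp1 : p ≤ 1) :
    ∀ l : ℝ, 0 ≤ l → l * p + Real.log (1 - p + p * Real.exp (-l)) ≤ l ^ 2 / 8 := by
  set E : ℝ → ℝ := fun l => Real.exp (-l) with hE
  set D : ℝ → ℝ := fun l => 1 - p + p * Real.exp (-l) with hD
  have hDpos : ∀ l, 0 < D l := fun l => hoeff_D_pos p l hp0 hp1
  have hEderiv : ∀ l, HasDerivAt E (-Real.exp (-l)) l := by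
    intro l
    have h := (Real.hasDerivAt_exp (-l)).comp l (hasDerivAt_neg l)
    simp at h
    exact h
  have hDderiv : ∀ l, HasDerivAt D (p * -Real.exp (-l)) l := by
    intro l
    exact ((hEderiv l).const_mul p).const_add (1 - p)
  set g1 : ℝ → ℝ := fun l => l / 4 - p + p * Real.exp (-l) / D l with hg1
  have hg1deriv : ∀ l, HasDerivAt g1
      (1 / 4 - p * (1 - p) * Real.exp (-l) / (D l) ^ 2) l := by
    intro l
    have h3 : HasDerivAt (fun l => p * Real.exp (-l) / D l)
        (((p * -Real.exp (-l)) * D l - (p * Real.exp (-l)) * (p * -Real.exp (-l))) / (D l) ^ 2) l :=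
      ((hEderiv l).const_mul p).div (hDderiv l) (hDpos l).ne'
    have h4 : HasDerivAt (fun l : ℝ => l / 4 - p) (1 / 4) l := by
      simpa using ((hasDerivAt_id l).div_const 4).sub_const p
    have := h4.add h3
    convert this using 1
    any_goals rfl
    have hDl := (hDpos l).ne'
    field_simp [hD]
    ring
  have hg1mono : Monotone g1 := by
    apply monotone_of_deriv_nonneg (fun l => (hg1deriv l).differentiableAt)
    intro l
    rw [(hg1deriv l).deriv]
    show (0:ℝ) ≤ 1 / 4 - p * (1 - p) * Real.exp (-l) / (1 - p + p * Real.exp (-l)) ^ 2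
    have hEpos := Real.exp_pos (-l)
    have hkey : 4 * (p * (1 - p) * Real.exp (-l)) ≤ (1 - p + p * Real.exp (-l)) ^ 2 := by
      nlinarith [sq_nonneg ((1 - p) - p * Real.exp (-l))]
    have hD2 : (0:ℝ) < (1 - p + p * Real.exp (-l)) ^ 2 := pow_pos (hoeff_D_pos p l hp0 hp1) 2
    rw [sub_nonneg, div_le_iff₀ hD2]
    linarith
  have hg10 : g1 0 = 0 := by
    simp only [hg1, hD]
    norm_num
  set g : ℝ → ℝ := fun l => l ^ 2 / 8 - (l * p + Real.log (D l)) with hg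
  have hgderiv : ∀ l, HasDerivAt g (g1 l) l := by
    intro l
    have h1 : HasDerivAt (fun l : ℝ => l ^ 2 / 8) (l / 4) l := by
      have := (hasDerivAt_pow 2 l).div_const 8
      convert this using 1
      any_goals rfl
      ring
    have h2 : HasDerivAt (fun l : ℝ => l * p) p l := hasDerivAt_mul_const p
    have h3 : HasDerivAt (fun l => Real.log (D l)) ((p * -Real.exp (-l)) / D l) l :=
      (hDderiv l).log (hDpos l).ne'
    have := h1.sub (h2.add h3)
    convert this using 1
    any_goals rfl
    have hDl := (hDpos l).ne'
    simp only [hg1]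
    field_simp [hD]
    ring
  have hgmono : MonotoneOn g (Set.Ici 0) := by
    apply monotoneOn_of_deriv_nonneg (convex_Ici 0)
    · exact (Differentiable.continuous fun l => (hgderiv l).differentiableAt).continuousOn
    · exact fun x _ => ((hgderiv x).differentiableAt).differentiableWithinAt
    · intro x hx
      rw [interior_Ici] at hx
      rw [(hgderiv x).deriv]
      have := hg1mono (le_of_lt hx)
      rw [hg10] at this
      exact this
  have hg0 : g 0 = 0 := by
    simp [hg, hD]
  intro l hl
  have := hgmono (Set.self_mem_Ici) (Set.mem_Ici.mpr hl) hl
  rw [hg0] at this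
  simp only [hg] at this
  linarith

/-- Hoeffding's lemma in exponential form -/
lemma hoeff_exp_bound (p l : ℝ) (hp0 : 0 ≤ p) (hp1 : p ≤ 1) (hl : 0 ≤ l) :
    1 - p + p * Real.exp (-l) ≤ Real.exp (l ^ 2 / 8 - l * p) := by
  have hD := hoeff_D_pos p l hp0 hp1
  have h := hoeff_log_bound p hp0 hp1 l hl
  calc 1 - p + p * Real.exp (-l) = Real.exp (Real.log (1 - p + p * Real.exp (-l))) :=
        (Real.exp_log hD).symm
    _ ≤ Real.exp (l ^ 2 / 8 - l * p) := Real.exp_le_exp.mpr (by linarith)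

/-- mgf bound for `p - Y` with `Y` taking values in `[0,1]` with mean `p`. -/
lemma hoeff_mgf_bound {Ω : Type*} [MeasurableSpace Ω] (μ : Measure Ω) [IsProbabilityMeasure μ]
    (Y : Ω → ℝ) (hY : Measurable Y) (hr : ∀ ω, Y ω ∈ Set.Icc (0:ℝ) 1)
    (p : ℝ) (hm : ∫ ω, Y ω ∂μ = p) (l : ℝ) (hl : 0 ≤ l) :
    mgf (fun ω => p - Y ω) μ l ≤ Real.exp (l ^ 2 / 8) := by
  have hYint : Integrable Y μ := by
    apply (integrable_const (1:ℝ)).mono' hY.aestronglyMeasurable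
    filter_upwards with ω
    rw [Real.norm_eq_abs, abs_le]
    exact ⟨by linarith [(hr ω).1], (hr ω).2⟩
  have hp0 : 0 ≤ p := by
    rw [← hm]; exact integral_nonneg fun ω => (hr ω).1
  have hp1 : p ≤ 1 := by
    rw [← hm]
    calc ∫ ω, Y ω ∂μ ≤ ∫ _, (1:ℝ) ∂μ := integral_mono hYint (integrable_const 1)
          (fun ω => (hr ω).2)
      _ = 1 := by simp
  -- pointwise convexity bound
  have hpt : ∀ ω, Real.exp (l * (p - Y ω)) ≤
      Real.exp (l * p) * (1 - Y ω + Y ω * Real.exp (-l)) := by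
    intro ω
    obtain ⟨hy0, hy1⟩ := hr ω
    have hconv := convexOn_exp.2 (Set.mem_univ (0:ℝ)) (Set.mem_univ (-l))
      (by linarith : (0:ℝ) ≤ 1 - Y ω) hy0 (by ring)
    simp only [smul_eq_mul, mul_zero, zero_add, Real.exp_zero, mul_one] at hconv
    have heq : l * (p - Y ω) = l * p + Y ω * (-l) := by ring
    rw [heq, Real.exp_add]
    have := mul_le_mul_of_nonneg_left hconv (Real.exp_pos (l * p)).le
    linarith
  -- integrability of both sides
  have hlhs_int : Integrable (fun ω => Real.exp (l * (p - Y ω))) μ := by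
    apply (integrable_const (Real.exp (l * p))).mono'
      (((measurable_const.sub hY).const_mul l).exp.aestronglyMeasurable)
    filter_upwards with ω
    rw [Real.norm_eq_abs, abs_of_pos (Real.exp_pos _), Real.exp_le_exp]
    have := (hr ω).1
    simp only [Pi.sub_apply]
    nlinarith
  have hrhs_int : Integrable (fun ω => Real.exp (l * p) * (1 - Y ω + Y ω * Real.exp (-l))) μ :=
    (((integrable_const (1:ℝ)).sub hYint).add (hYint.mul_const _)).const_mul _
  have hint_le : ∫ ω, Real.exp (l * (p - Y ω)) ∂μ ≤
      ∫ ω, Real.exp (l * p) * (1 - Y ω + Y ω * Real.exp (-l)) ∂μ :=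
    integral_mono hlhs_int hrhs_int hpt
  have hrhs_eq : ∫ ω, Real.exp (l * p) * (1 - Y ω + Y ω * Real.exp (-l)) ∂μ =
      Real.exp (l * p) * (1 - p + p * Real.exp (-l)) := by
    rw [integral_const_mul]
    congr 1
    have hi1 : Integrable (fun ω => 1 - Y ω) μ := (integrable_const (1:ℝ)).sub hYint
    have hi2 : Integrable (fun ω => Y ω * Real.exp (-l)) μ := hYint.mul_const _
    rw [integral_add hi1 hi2,
      integral_sub (integrable_const 1) hYint, integral_mul_const, hm]
    simp
  rw [mgf]
  calc ∫ ω, Real.exp (l * (p - Y ω)) ∂μ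
      ≤ Real.exp (l * p) * (1 - p + p * Real.exp (-l)) := by rw [← hrhs_eq]; exact hint_le
    _ ≤ Real.exp (l * p) * Real.exp (l ^ 2 / 8 - l * p) :=
        mul_le_mul_of_nonneg_left (hoeff_exp_bound p l hp0 hp1 hl) (Real.exp_pos _).le
    _ = Real.exp (l ^ 2 / 8) := by rw [← Real.exp_add]; ring_nf

/-- per-s Hoeffding tail bound -/
lemma hoeff_tail_bound {Ω : Type*} [MeasurableSpace Ω] (μ : Measure Ω) [IsProbabilityMeasure μ]
    (X : ℕ → Ω → ℝ) (hmeas : ∀ s, Measurable (X s))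
    (hindep : iIndepFun X μ)
    (hrange : ∀ s ω, X s ω ∈ Set.Icc (0:ℝ) 1)
    (p : ℝ) (hmean : ∀ s, ∫ ω, X s ω ∂μ = p) (s : ℕ) (hs : 1 ≤ s) (ε : ℝ) (hε : 0 < ε) :
    (μ {ω | (1 / (s : ℝ)) * ∑ r ∈ Finset.range s, X r ω - p ≤ -ε}).toReal ≤
      Real.exp (-(2 * s * ε ^ 2)) := by
  have hsR : (0:ℝ) < (s:ℝ) := by exact_mod_cast hs
  set Y : ℕ → Ω → ℝ := fun r ω => p - X r ω with hYdef
  have hYmeas : ∀ r, Measurable (Y r) := fun r => measurable_const.sub (hmeas r)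
  have hYindep : iIndepFun Y μ := by
    have := hindep.comp (fun _ (x : ℝ) => p - x) (fun _ => measurable_const.sub measurable_id)
    exact this
  have hp0 : 0 ≤ p := by
    rw [← hmean 0]; exact integral_nonneg fun ω => (hrange 0 ω).1
  have hl : (0:ℝ) ≤ 4 * ε := by linarith
  have h_int : ∀ i ∈ Finset.range s, Integrable (fun ω => Real.exp (4 * ε * Y i ω)) μ := by
    intro i _
    apply (integrable_const (Real.exp (4 * ε * p))).mono'
      (((hYmeas i).const_mul _).exp.aestronglyMeasurable)
    filter_upwards with ω
    rw [Real.norm_eq_abs, abs_of_pos (Real.exp_pos _), Real.exp_le_exp]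
    have := (hrange i ω).1
    simp only [hYdef]
    nlinarith
  have h_sum_int : Integrable (fun ω => Real.exp (4 * ε * (∑ r ∈ Finset.range s, Y r) ω)) μ :=
    hYindep.integrable_exp_mul_sum hYmeas h_int
  have hset : {ω | (1 / (s : ℝ)) * ∑ r ∈ Finset.range s, X r ω - p ≤ -ε} =
      {ω | (s : ℝ) * ε ≤ (∑ r ∈ Finset.range s, Y r) ω} := by
    ext ω
    simp only [Set.mem_setOf_eq, Finset.sum_apply, hYdef]
    have hsum : ∑ r ∈ Finset.range s, (p - X r ω) =
        (s : ℝ) * p - ∑ r ∈ Finset.range s, X r ω := by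
      rw [Finset.sum_sub_distrib, Finset.sum_const, Finset.card_range, nsmul_eq_mul]
    rw [hsum]
    set A := ∑ r ∈ Finset.range s, X r ω
    constructor
    · intro h
      have h2 := mul_le_mul_of_nonneg_left h hsR.le
      have e : (s:ℝ) * (1 / (s:ℝ) * A - p) = A - (s:ℝ) * p := by
        field_simp
      rw [e] at h2
      nlinarith
    · intro h
      have h2 := mul_le_mul_of_nonneg_left h (by positivity : (0:ℝ) ≤ 1 / (s:ℝ))
      have e1 : (1 / (s:ℝ)) * ((s:ℝ) * ε) = ε := by field_simp
      have e2 : (1 / (s:ℝ)) * ((s:ℝ) * p - A) = p - (1 / (s:ℝ)) * A := by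
        field_simp
      rw [e1, e2] at h2
      linarith
  rw [hset]
  calc (μ {ω | (s : ℝ) * ε ≤ (∑ r ∈ Finset.range s, Y r) ω}).toReal
      ≤ Real.exp (-(4 * ε) * ((s:ℝ) * ε)) * mgf (∑ r ∈ Finset.range s, Y r) μ (4 * ε) :=
        measure_ge_le_exp_mul_mgf ((s:ℝ) * ε) hl h_sum_int
    _ = Real.exp (-(4 * ε) * ((s:ℝ) * ε)) * ∏ r ∈ Finset.range s, mgf (Y r) μ (4 * ε) := by
        rw [hYindep.mgf_sum hYmeas]
    _ ≤ Real.exp (-(4 * ε) * ((s:ℝ) * ε)) * ∏ r ∈ Finset.range s,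
          Real.exp ((4 * ε) ^ 2 / 8) := by
        apply mul_le_mul_of_nonneg_left _ (Real.exp_pos _).le
        apply Finset.prod_le_prod (fun r _ => mgf_nonneg)
        intro r _
        exact hoeff_mgf_bound μ (X r) (hmeas r) (hrange r) p (hmean r) (4 * ε) hl
    _ = Real.exp (-(2 * s * ε ^ 2)) := by
        rw [Finset.prod_const, Finset.card_range, ← Real.exp_nat_mul, ← Real.exp_add]
        congr 1
        ring

theorem sum_prob_lower_dev_bound
    {Ω : Type*} [MeasurableSpace Ω] (μ : Measure Ω) [IsProbabilityMeasure μ]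
    (ξ α F : ℝ) (hξ : 0 < ξ) (hα : 1 ≤ α) (hF : 1 ≤ F)
    (X : ℕ → Ω → ℝ) (hmeas : ∀ s, Measurable (X s))
    (hindep : iIndepFun X μ)
    (hrange : ∀ s ω, X s ω ∈ Set.Icc (0:ℝ) 1)
    (p : ℝ) (hmean : ∀ s, ∫ ω, X s ω ∂μ = p) (t : ℕ) :
    ∑ s ∈ Finset.Icc 1 t,
        (μ {ω | (1 / (s : ℝ)) * ∑ r ∈ Finset.range s, X r ω - p ≤
            -(ξ + Real.sqrt (α * Real.log F / s))}).toReal ≤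
      1 / (2 * ξ ^ 2 * F ^ (2 * α)) := by
  have hF0 : (0:ℝ) < F := lt_of_lt_of_le one_pos hF
  have hlogF : 0 ≤ Real.log F := Real.log_nonneg hF
  have hα0 : (0:ℝ) < α := lt_of_lt_of_le one_pos hα
  set C : ℝ := Real.exp (-(2 * α * Real.log F)) with hC
  -- step 1: bound each summand
  have hstep : ∀ s ∈ Finset.Icc 1 t,
      (μ {ω | (1 / (s : ℝ)) * ∑ r ∈ Finset.range s, X r ω - p ≤
            -(ξ + Real.sqrt (α * Real.log F / s))}).toReal ≤
      Real.exp (-(2 * ξ ^ 2) * s) * C := by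
    intro s hsmem
    have hs : 1 ≤ s := (Finset.mem_Icc.mp hsmem).1
    have hsR : (0:ℝ) < (s:ℝ) := by exact_mod_cast hs
    set q : ℝ := α * Real.log F / s with hq
    have hq0 : 0 ≤ q := by positivity
    set ε : ℝ := ξ + Real.sqrt q with hεdef
    have hε : 0 < ε := by
      have := Real.sqrt_nonneg q
      linarith
    have h1 := hoeff_tail_bound μ X hmeas hindep hrange p hmean s hs ε hε
    refine h1.trans ?_
    rw [hC, ← Real.exp_add, Real.exp_le_exp]
    have hsq : Real.sqrt q ^ 2 = q := Real.sq_sqrt hq0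
    have hqs : (s:ℝ) * q = α * Real.log F := by
      rw [hq]; field_simp
    have hsqrt0 := Real.sqrt_nonneg q
    have hε2 : ε ^ 2 = ξ ^ 2 + 2 * ξ * Real.sqrt q + q := by
      rw [hεdef, add_sq, hsq]
    have h5 : (s:ℝ) * ε ^ 2 = (s:ℝ) * ξ ^ 2 + 2 * ξ * ((s:ℝ) * Real.sqrt q)
        + α * Real.log F := by
      rw [hε2, ← hqs]; ring
    have h6 : 0 ≤ ξ * ((s:ℝ) * Real.sqrt q) :=
      mul_nonneg hξ.le (mul_nonneg hsR.le hsqrt0)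
    linarith [h5, h6]
  have h2 := Finset.sum_le_sum hstep
  refine h2.trans ?_
  -- step 2: geometric sum
  rw [← Finset.sum_mul]
  set r : ℝ := Real.exp (-(2 * ξ ^ 2)) with hr
  have hr0 : 0 < r := Real.exp_pos _
  have hr1 : r < 1 := by
    rw [hr, Real.exp_lt_one_iff]
    nlinarith
  have hexp_eq : ∀ s : ℕ, Real.exp (-(2 * ξ ^ 2) * s) = r ^ s := by
    intro s
    rw [hr, ← Real.exp_nat_mul]
    congr 1; ring
  have hgeom : ∑ s ∈ Finset.Icc 1 t, Real.exp (-(2 * ξ ^ 2) * s) ≤ 1 / (2 * ξ ^ 2) := by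
    have hre : ∑ s ∈ Finset.Icc 1 t, Real.exp (-(2 * ξ ^ 2) * s) =
        r * ∑ i ∈ Finset.range t, r ^ i := by
      rw [Finset.mul_sum]
      rw [← Finset.Ico_add_one_right_eq_Icc, Finset.sum_Ico_eq_sum_range]
      try simp only [Nat.add_sub_cancel]
      apply Finset.sum_congr rfl
      intro i _
      rw [hexp_eq]
      rw [← pow_succ']
      congr 1
      omega
    rw [hre]
    have h1r : 0 < 1 - r := by linarith
    have hS_le : ∑ i ∈ Finset.range t, r ^ i ≤ (1 - r)⁻¹ := by
      have hmul := geom_sum_mul r t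
      have hrt : 0 ≤ r ^ t := le_of_lt (pow_pos hr0 t)
      have hS1 : (∑ i ∈ Finset.range t, r ^ i) * (1 - r) ≤ 1 := by
        have : (∑ i ∈ Finset.range t, r ^ i) * (1 - r) =
            -((∑ i ∈ Finset.range t, r ^ i) * (r - 1)) := by ring
        rw [this, hmul]
        linarith
      rw [← one_div]
      rw [le_div_iff₀ h1r]
      exact hS1
    have hξ2 : (0:ℝ) < 2 * ξ ^ 2 := by positivity
    have hfinal : r * (1 - r)⁻¹ ≤ 1 / (2 * ξ ^ 2) := by
      have hexp1 : 1 + 2 * ξ ^ 2 ≤ Real.exp (2 * ξ ^ 2) := by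
        linarith [Real.add_one_le_exp (2 * ξ ^ 2)]
      have hre1 : r * Real.exp (2 * ξ ^ 2) = 1 := by
        rw [hr, ← Real.exp_add]; norm_num
      have hkey : r * (1 + 2 * ξ ^ 2) ≤ 1 := by
        calc r * (1 + 2 * ξ ^ 2) ≤ r * Real.exp (2 * ξ ^ 2) :=
              mul_le_mul_of_nonneg_left hexp1 hr0.le
          _ = 1 := hre1
      rw [show r * (1 - r)⁻¹ = r / (1 - r) from (div_eq_mul_inv r (1 - r)).symm,
        div_le_div_iff₀ h1r hξ2]
      nlinarith
    calc r * ∑ i ∈ Finset.range t, r ^ i ≤ r * (1 - r)⁻¹ :=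
          mul_le_mul_of_nonneg_left hS_le hr0.le
      _ ≤ 1 / (2 * ξ ^ 2) := hfinal
  have hC0 : 0 ≤ C := (Real.exp_pos _).le
  have hCeq : C = (F ^ (2 * α))⁻¹ := by
    rw [hC, Real.rpow_def_of_pos hF0, ← Real.exp_neg]
    congr 1; ring
  have hFpow : (0:ℝ) < F ^ (2 * α) := Real.rpow_pos_of_pos hF0 _
  calc (∑ s ∈ Finset.Icc 1 t, Real.exp (-(2 * ξ ^ 2) * s)) * C
      ≤ (1 / (2 * ξ ^ 2)) * C := mul_le_mul_of_nonneg_right hgeom hC0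
    _ = 1 / (2 * ξ ^ 2 * F ^ (2 * α)) := by
        rw [hCeq]
        field_simp
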